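/- Under any single-mode phase-insensitive Gaussian channel, a coherent thermal state transforms as ρ(β,α) ↦ ρ(β', xα) with n_th(β') = x² n_th(β) + (x² + y - 1)/2, where x² is the gain and the added noise y satisfies y ≥ |x² - 1|; consequently, for any sequence of such channels applied to ρ(β, √n α) whose outputs approach |α⟩, one has limsup_{n→∞} n·(1 - ⟨α|output_n|α⟩) ≥ n_th(β). -/

import Mathlib

/-- Optimality bound for single-mode phase-insensitive Gaussian distillation.
A phase-insensitive Gaussian channel with gain `x²` and added noise `y ≥ |x²-1|` maps
`ρ(β,α) ↦ ρ(β', xα)` with `n_th(β') = x² n_th(β) + (x²+y-1)/2`; the fidelity of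
`ρ(β',α')` with `|α⟩` is `(1/Z')e^{-|α-α'|²/Z'}`, `Z' = 1+n_th(β')`.  For any sequence of such
channels applied to `ρ(β,√n α)` whose output fidelities `F n` with `|α⟩` tend to 1, one has
`limsup_n n(1-F n) ≥ n_th(β)`. -/
theorem gaussian_channel_limsup (β ω : ℝ) (hβ : 0 < β) (hω : 0 < ω) (α : ℝ) (hα : 0 < α)
    (x y : ℕ → ℝ) (hy : ∀ n, |x n ^ 2 - 1| ≤ y n) :
    let nth := (Real.exp (β * ω) - 1)⁻¹
    let nout : ℕ → ℝ := fun n => x n ^ 2 * nth + (x n ^ 2 + y n - 1) / 2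
    let F : ℕ → ℝ := fun n =>
      (1 / (1 + nout n)) * Real.exp (-(x n * Real.sqrt n * α - α) ^ 2 / (1 + nout n))
    Filter.Tendsto F Filter.atTop (nhds 1) →
      ENNReal.ofReal nth ≤
        Filter.limsup (fun n : ℕ => ENNReal.ofReal ((n : ℝ) * (1 - F n))) Filter.atTop := by
  intro nth nout F hF
  have hnth : 0 < nth := by
    have h1 : 1 < Real.exp (β * ω) := by
      rw [Real.one_lt_exp_iff]
      positivity
    simp only [nth]
    exact inv_pos.mpr (by linarith)
  have hxn : ∀ n, x n ^ 2 * nth ≤ nout n := by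
    intro n
    have h2 : 1 - x n ^ 2 ≤ y n := by
      have := neg_abs_le (x n ^ 2 - 1); linarith [hy n]
    simp only [nout]
    linarith
  have hx0 : ∀ n, 0 ≤ x n ^ 2 * nth := fun n => by positivity
  have hZpos : ∀ n, 0 < 1 + nout n := fun n => by have := hxn n; have := hx0 n; linarith
  have hFle : ∀ n, F n ≤ 1 / (1 + nout n) := by
    intro n
    have he : Real.exp (-(x n * Real.sqrt n * α - α) ^ 2 / (1 + nout n)) ≤ 1 := by
      rw [Real.exp_le_one_iff]
      apply div_nonpos_of_nonpos_of_nonneg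
      · simp [sq_nonneg]
      · exact (hZpos n).le
    have hp : (0:ℝ) < 1 / (1 + nout n) := one_div_pos.mpr (hZpos n)
    calc F n ≤ (1 / (1 + nout n)) * 1 := mul_le_mul_of_nonneg_left he hp.le
      _ = 1 / (1 + nout n) := mul_one _
  have hGle1 : ∀ n, 1 / (1 + nout n) ≤ 1 := by
    intro n
    rw [div_le_one (hZpos n)]
    have := hxn n; have := hx0 n; linarith
  have hG : Filter.Tendsto (fun n => 1 / (1 + nout n)) Filter.atTop (nhds 1) :=
    tendsto_of_tendsto_of_tendsto_of_le_of_le hF tendsto_const_nhds hFle hGle1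
  have hZ : Filter.Tendsto (fun n => 1 + nout n) Filter.atTop (nhds 1) := by
    have := (hG.inv₀ one_ne_zero)
    simpa [one_div, inv_inv] using this
  have hexp : Filter.Tendsto
      (fun n => Real.exp (-(x n * Real.sqrt n * α - α) ^ 2 / (1 + nout n)))
      Filter.atTop (nhds 1) := by
    have h : ∀ n, Real.exp (-(x n * Real.sqrt n * α - α) ^ 2 / (1 + nout n))
        = F n * (1 + nout n) := by
      intro n
      simp only [F]
      rw [one_div, mul_comm ((1 + nout n)⁻¹) (Real.exp _), mul_assoc _ ((1 + nout n)⁻¹) (1 + nout n), inv_mul_cancel₀ (hZpos n).ne', mul_one]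
    simp_rw [h]
    simpa using hF.mul hZ
  have hE : Filter.Tendsto
      (fun n => -(x n * Real.sqrt n * α - α) ^ 2 / (1 + nout n)) Filter.atTop (nhds 0) := by
    have hlog := (Real.continuousAt_log one_ne_zero).tendsto.comp hexp
    simp only [Real.log_one] at hlog
    simpa [Function.comp_def, Real.log_exp] using hlog
  have hsq : Filter.Tendsto (fun n => (x n * Real.sqrt n * α - α) ^ 2)
      Filter.atTop (nhds 0) := by
    have h0 : Filter.Tendsto
        (fun n => (-(x n * Real.sqrt n * α - α) ^ 2 / (1 + nout n)) * (1 + nout n) * (-1))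
        Filter.atTop (nhds 0) := by
      have := (hE.mul hZ).mul_const (-1 : ℝ)
      simpa using this
    refine h0.congr fun n => ?_
    rw [div_mul_cancel₀ _ (hZpos n).ne']
    ring
  have habs : Filter.Tendsto (fun n => x n * Real.sqrt n * α - α) Filter.atTop (nhds 0) := by
    have h2 := (Real.continuous_sqrt.tendsto 0).comp hsq
    simp only [Function.comp_def, Real.sqrt_sq_eq_abs, Real.sqrt_zero] at h2
    exact (tendsto_zero_iff_abs_tendsto_zero _).mpr h2
  have hxa : Filter.Tendsto (fun n => x n * Real.sqrt n) Filter.atTop (nhds 1) := by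
    have h1 : Filter.Tendsto (fun n => x n * Real.sqrt n * α) Filter.atTop (nhds α) := by
      have := habs.add (tendsto_const_nhds (x := α) (f := Filter.atTop (α := ℕ)))
      simpa using this
    have h2 := h1.div_const α
    simpa [mul_div_assoc, div_self hα.ne'] using h2
  have hnx2 : Filter.Tendsto (fun n : ℕ => (n : ℝ) * x n ^ 2) Filter.atTop (nhds 1) := by
    have h3 := hxa.mul hxa
    have heq : ∀ n : ℕ, (x n * Real.sqrt n) * (x n * Real.sqrt n) = (n : ℝ) * x n ^ 2 := by
      intro n
      have hs : Real.sqrt n * Real.sqrt n = (n : ℝ) :=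
        Real.mul_self_sqrt (Nat.cast_nonneg n)
      nlinarith [hs]
    simp_rw [heq] at h3
    simpa using h3
  have hg : Filter.Tendsto (fun n : ℕ => (n : ℝ) * x n ^ 2 * nth / (1 + nout n))
      Filter.atTop (nhds nth) := by
    have := (hnx2.mul_const nth).div hZ one_ne_zero
    simpa [Pi.div_def] using this
  have hle : ∀ n : ℕ, (n : ℝ) * x n ^ 2 * nth / (1 + nout n) ≤ (n : ℝ) * (1 - F n) := by
    intro n
    have hz := hZpos n
    have hfle := hFle n
    have h1 : nout n / (1 + nout n) ≤ 1 - F n := by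
      have h2 : nout n / (1 + nout n) = 1 - 1 / (1 + nout n) := by field_simp; ring
      linarith
    have h3 : x n ^ 2 * nth / (1 + nout n) ≤ nout n / (1 + nout n) :=
      div_le_div_of_nonneg_right (hxn n) hz.le
    have hn0 : (0:ℝ) ≤ (n : ℝ) := Nat.cast_nonneg n
    calc (n : ℝ) * x n ^ 2 * nth / (1 + nout n)
        = (n : ℝ) * (x n ^ 2 * nth / (1 + nout n)) := by ring
      _ ≤ (n : ℝ) * (nout n / (1 + nout n)) := mul_le_mul_of_nonneg_left h3 hn0
      _ ≤ (n : ℝ) * (1 - F n) := mul_le_mul_of_nonneg_left h1 hn0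
  have hlim : Filter.Tendsto
      (fun n : ℕ => ENNReal.ofReal ((n : ℝ) * x n ^ 2 * nth / (1 + nout n)))
      Filter.atTop (nhds (ENNReal.ofReal nth)) :=
    (ENNReal.continuous_ofReal.tendsto _).comp hg
  rw [← hlim.limsup_eq]
  exact Filter.limsup_le_limsup
    (Filter.Eventually.of_forall fun n => ENNReal.ofReal_le_ofReal (hle n))
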